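/- Let S be a feasible schedule and let C ⊆ T be a set of time slots with vol_S(C) = fv(C). Then vol_S(j,C) = fv(j,C) for every job j ∈ J, and every job j with fv(j,C) > 0 is scheduled (on some processor) at every slot of E_j \ C. -/
import Mathlib


open Finset

/-- Execution interval of job `j`: the slots between its release time and deadline. -/
def Ei {J : Type} (r dl : J → ℕ) (j : J) : Finset ℕ := Finset.Icc (r j) (dl j)

/-- The time horizon `T = {0, …, d}`, where `d` is the maximal deadline. -/
def Tslots {J : Type} [Fintype J] (dl : J → ℕ) : Finset ℕ :=
  Finset.Icc 0 (Finset.univ.sup dl)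

/-- A schedule assigns to each processor and slot at most one job; it is feasible if
every job `j` is assigned to exactly `p j` processor/slot pairs, all of whose slots lie
in `E j`, and no job is assigned to two different processors at the same slot. -/
def Feasible {J : Type} [Fintype J] [DecidableEq J] (r dl p : J → ℕ) (m : ℕ)
    (S : Fin m → ℕ → Option J) : Prop :=
  (∀ (k : Fin m) (t : ℕ) (j : J), S k t = some j → t ∈ Ei r dl j) ∧
  (∀ j : J, ((Finset.univ ×ˢ Tslots dl).filter
      (fun kt : Fin m × ℕ => S kt.1 kt.2 = some j)).card = p j) ∧
  (∀ (t : ℕ) (j : J) (k k' : Fin m), S k t = some j → S k' t = some j → k = k')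

/-- Number of processors busy at slot `t` in schedule `S`. -/
def volT {J : Type} [DecidableEq J] {m : ℕ} (S : Fin m → ℕ → Option J) (t : ℕ) : ℕ :=
  (Finset.univ.filter (fun k : Fin m => (S k t).isSome)).card

/-- Number of slots of `Q` at which job `j` is scheduled in `S`. -/
def volJ {J : Type} [DecidableEq J] {m : ℕ} (S : Fin m → ℕ → Option J) (j : J)
    (Q : Finset ℕ) : ℕ :=
  (Q.filter (fun t => ∃ k, S k t = some j)).card

/-- Total volume scheduled in `Q` by `S`. -/
def volQ {J : Type} [Fintype J] [DecidableEq J] {m : ℕ} (S : Fin m → ℕ → Option J)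
    (Q : Finset ℕ) : ℕ :=
  ∑ j, volJ S j Q

/-- Forced volume of job `j` in `Q`: `max {0, p j − |E j \ Q|}`. -/
def fvJ {J : Type} (r dl p : J → ℕ) (j : J) (Q : Finset ℕ) : ℕ :=
  p j - (Ei r dl j \ Q).card

/-- Total forced volume in `Q`. -/
def fvQ {J : Type} [Fintype J] (r dl p : J → ℕ) (Q : Finset ℕ) : ℕ :=
  ∑ j, fvJ r dl p j Q

/-- Possible volume of job `j` in `Q`: `min {p j, |E j ∩ Q|}`. -/
def pvJ {J : Type} (r dl p : J → ℕ) (j : J) (Q : Finset ℕ) : ℕ :=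
  min (p j) ((Ei r dl j) ∩ Q).card

/-- Total possible volume in `Q`. -/
def pvQ {J : Type} [Fintype J] (r dl p : J → ℕ) (Q : Finset ℕ) : ℕ :=
  ∑ j, pvJ r dl p j Q

section Aux

variable {J : Type} [Fintype J] [DecidableEq J] {r dl p : J → ℕ} {m : ℕ}
  {S : Fin m → ℕ → Option J}

/-- Scheduled slots of job j. -/
def Asched (r dl : J → ℕ) (S : Fin m → ℕ → Option J) (j : J) : Finset ℕ :=
  (Ei r dl j).filter (fun t => ∃ k, S k t = some j)

lemma Ei_subset_Tslots (j : J) : Ei r dl j ⊆ Tslots dl := by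
  intro t ht
  simp only [Ei, Finset.mem_Icc] at ht
  simp only [Tslots, Finset.mem_Icc]
  exact ⟨Nat.zero_le t, ht.2.trans (Finset.le_sup (Finset.mem_univ j))⟩

lemma Asched_card (hS : Feasible r dl p m S) (j : J) :
    (Asched r dl S j).card = p j := by
  obtain ⟨h1, h2, h3⟩ := hS
  rw [← h2 j]
  have himg : ((Finset.univ ×ˢ Tslots dl).filter
      (fun kt : Fin m × ℕ => S kt.1 kt.2 = some j)).image Prod.snd = Asched r dl S j := by
    ext t
    simp only [Finset.mem_image, Finset.mem_filter, Finset.mem_product, Asched]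
    constructor
    · rintro ⟨⟨k, t'⟩, ⟨⟨-, -⟩, hkt⟩, rfl⟩
      exact ⟨h1 k t' j hkt, k, hkt⟩
    · rintro ⟨hE, k, hk⟩
      exact ⟨(k, t), ⟨⟨Finset.mem_univ k, Ei_subset_Tslots j hE⟩, hk⟩, rfl⟩
  rw [← himg]
  apply Finset.card_image_of_injOn
  rintro ⟨k, t⟩ hkt ⟨k', t'⟩ hkt' (h : t = t')
  subst h
  simp only [Finset.coe_filter, Set.mem_setOf_eq] at hkt hkt'
  exact Prod.ext (h3 t j k k' hkt.2 hkt'.2) rfl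

lemma volJ_eq_inter (hS : Feasible r dl p m S) (j : J) (C : Finset ℕ) :
    volJ S j C = (Asched r dl S j ∩ C).card := by
  rw [volJ]
  congr 1
  ext t
  simp only [Finset.mem_filter, Asched, Finset.mem_inter]
  constructor
  · rintro ⟨htC, k, hk⟩
    exact ⟨⟨hS.1 k t j hk, k, hk⟩, htC⟩
  · rintro ⟨⟨-, hk⟩, htC⟩
    exact ⟨htC, hk⟩

lemma volJ_ge_fvJ (hS : Feasible r dl p m S) (j : J) (C : Finset ℕ) :
    fvJ r dl p j C ≤ volJ S j C := by
  rw [volJ_eq_inter hS, fvJ]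
  have hsub : Asched r dl S j \ C ⊆ Ei r dl j \ C :=
    Finset.sdiff_subset_sdiff (Finset.filter_subset _ _) (le_refl _)
  have h1 := Finset.card_inter_add_card_sdiff (Asched r dl S j) C
  rw [Asched_card hS j] at h1
  have h2 := Finset.card_le_card hsub
  omega

end Aux

/-- If `S` schedules in `C` exactly the forced volume, then every job is scheduled in
`C` exactly its forced volume, and every job with positive forced volume in `C` is
scheduled at every slot of `E j \ C`. -/
theorem tight_set_structure (J : Type) [Fintype J] [DecidableEq J]
    (r dl p : J → ℕ) (hrd : ∀ j, r j ≤ dl j) (hp : ∀ j, p j ≤ dl j - r j + 1)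
    (m : ℕ) (hm : 1 ≤ m)
    (S : Fin m → ℕ → Option J) (hS : Feasible r dl p m S)
    (C : Finset ℕ) (hC : C ⊆ Tslots dl) (htight : volQ S C = fvQ r dl p C) :
    (∀ j : J, volJ S j C = fvJ r dl p j C) ∧
    (∀ j : J, 0 < fvJ r dl p j C →
      ∀ t ∈ Ei r dl j \ C, ∃ k : Fin m, S k t = some j) := by
  have hle : ∀ j ∈ (Finset.univ : Finset J), fvJ r dl p j C ≤ volJ S j C :=
    fun j _ => volJ_ge_fvJ hS j C
  have heq : ∀ j ∈ (Finset.univ : Finset J), fvJ r dl p j C = volJ S j C := by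
    rw [← Finset.sum_eq_sum_iff_of_le hle]
    exact htight.symm
  have heq' : ∀ j : J, volJ S j C = fvJ r dl p j C :=
    fun j => (heq j (Finset.mem_univ j)).symm
  refine ⟨heq', fun j hpos t ht => ?_⟩
  have hv := heq' j
  rw [volJ_eq_inter hS, fvJ] at hv
  have h1 := Finset.card_inter_add_card_sdiff (Asched r dl S j) C
  rw [Asched_card hS j] at h1
  have hsub : Asched r dl S j \ C ⊆ Ei r dl j \ C :=
    Finset.sdiff_subset_sdiff (Finset.filter_subset _ _) (le_refl _)
  have h2 := Finset.card_le_card hsub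
  have hfv : 0 < p j - (Ei r dl j \ C).card := hpos
  have hcard : (Ei r dl j \ C).card ≤ (Asched r dl S j \ C).card := by omega
  have hAeq : Asched r dl S j \ C = Ei r dl j \ C :=
    Finset.eq_of_subset_of_card_le hsub hcard
  have : t ∈ Asched r dl S j \ C := hAeq ▸ ht
  have := (Finset.mem_sdiff.mp this).1
  exact (Finset.mem_filter.mp this).2
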